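/- Let G be a finite simple graph and let λ be a complex number. Then λ is an eigenvalue of the 3-power hypergraph G^(3) if and only if there exists a signed induced subgraph of G having an eigenvalue β with β² = λ³. -/

import Mathlib

open Finset

/-- `(lam, x)` is an eigenpair of the `k`-uniform hypergraph with hyperedge set `E`:
`x` is nonzero and for every vertex `i`,
`lam * x i ^ (k-1) = ∑_{e ∈ E, i ∈ e} ∏_{v ∈ e \ {i}} x v`. -/
def IsHypergraphEigenpair {W : Type*} [Fintype W] [DecidableEq W]
    (k : ℕ) (E : Finset (Finset W)) (lam : ℂ) (x : W → ℂ) : Prop :=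
  x ≠ 0 ∧ ∀ i : W, lam * x i ^ (k - 1) =
    ∑ e ∈ E.filter (fun e => i ∈ e), ∏ v ∈ e.erase i, x v

/-- `lam` is an eigenvalue of the `k`-uniform hypergraph with hyperedge set `E`. -/
def IsHypergraphEigenvalue {W : Type*} [Fintype W] [DecidableEq W]
    (k : ℕ) (E : Finset (Finset W)) (lam : ℂ) : Prop :=
  ∃ x, IsHypergraphEigenpair k E lam x

/-- The hyperedge of the `k`-power hypergraph `G^(k)` corresponding to the edge `e` of `G`:
it consists of the two endpoints of `e` together with the `k - 2` added vertices on `e`. -/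
def powerEdge {V : Type*} [Fintype V] [DecidableEq V] (G : SimpleGraph V) [DecidableRel G.Adj]
    (k : ℕ) (e : G.edgeSet) : Finset (V ⊕ (G.edgeSet × Fin (k - 2))) :=
  Finset.univ.filter (fun v =>
    (∃ i, v = Sum.inl i ∧ i ∈ (e : Sym2 V)) ∨ ∃ t, v = Sum.inr (e, t))

/-- The hyperedge set of the `k`-power hypergraph `G^(k)`, whose vertices are the vertices of `G`
(`Sum.inl`) together with `k - 2` new vertices for each edge of `G` (`Sum.inr`). -/
def powerEdges {V : Type*} [Fintype V] [DecidableEq V] (G : SimpleGraph V) [DecidableRel G.Adj]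
    (k : ℕ) : Finset (Finset (V ⊕ (G.edgeSet × Fin (k - 2)))) :=
  Finset.univ.image (powerEdge G k)

noncomputable def csqrt (z : ℂ) : ℂ :=
  Classical.choose (IsAlgClosed.exists_pow_nat_eq z (n := 2) two_pos)

lemma csqrt_sq (z : ℂ) : csqrt z ^ 2 = z :=
  Classical.choose_spec (IsAlgClosed.exists_pow_nat_eq z (n := 2) two_pos)

noncomputable def ccbrt (z : ℂ) : ℂ :=
  Classical.choose (IsAlgClosed.exists_pow_nat_eq z (n := 3) three_pos)

lemma ccbrt_cube (z : ℂ) : ccbrt z ^ 3 = z :=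
  Classical.choose_spec (IsAlgClosed.exists_pow_nat_eq z (n := 3) three_pos)

set_option linter.unusedSectionVars false

namespace PH

variable {V : Type*} [Fintype V] [DecidableEq V] (G : SimpleGraph V) [DecidableRel G.Adj]

def z0 : Fin (3 - 2) := ⟨0, by omega⟩

lemma fin_eq_z0 (t : Fin (3 - 2)) : t = z0 := by
  have := t.isLt; ext; omega

def edgeOf {a b : V} (h : G.Adj a b) : G.edgeSet := ⟨s(a, b), G.mem_edgeSet.mpr h⟩

lemma mem_powerEdge3 {e : G.edgeSet} {w : V ⊕ (G.edgeSet × Fin (3 - 2))} :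
    w ∈ powerEdge G 3 e ↔
      ((∃ i, w = Sum.inl i ∧ i ∈ (e : Sym2 V)) ∨ ∃ t, w = Sum.inr (e, t)) := by
  simp [powerEdge]

lemma inl_mem_powerEdge3 {e : G.edgeSet} {i : V} :
    Sum.inl i ∈ powerEdge G 3 e ↔ i ∈ (e : Sym2 V) := by
  rw [mem_powerEdge3]
  simp

lemma inr_mem_powerEdge3 {e e' : G.edgeSet} {t : Fin (3 - 2)} :
    Sum.inr (e', t) ∈ powerEdge G 3 e ↔ e' = e := by
  rw [mem_powerEdge3]
  constructor
  · rintro (⟨i, hi, -⟩ | ⟨t', ht'⟩)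
    · exact absurd hi (by simp)
    · simpa using congrArg (fun w => match w with | Sum.inr p => p.1 | Sum.inl _ => e) ht'
  · rintro rfl; exact Or.inr ⟨t, rfl⟩

lemma powerEdge3_inj : Function.Injective (powerEdge G 3) := by
  intro e e' h
  have h1 : Sum.inr (e, z0) ∈ powerEdge G 3 e' := by
    rw [← h, inr_mem_powerEdge3]
  exact (inr_mem_powerEdge3 G).mp h1

lemma edge_repr (e : G.edgeSet) : ∃ (a b : V) (h : G.Adj a b), e = edgeOf G h := by
  obtain ⟨a, b, hab⟩ : ∃ a b, (e : Sym2 V) = s(a, b) := by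
    induction (e : Sym2 V) using Sym2.ind with
    | _ x y => exact ⟨x, y, rfl⟩
  have hmem : s(a, b) ∈ G.edgeSet := hab ▸ e.2
  exact ⟨a, b, G.mem_edgeSet.mp hmem, Subtype.ext hab⟩

end PH

namespace PH
set_option linter.unusedSectionVars false
variable {V : Type*} [Fintype V] [DecidableEq V] (G : SimpleGraph V) [DecidableRel G.Adj]

lemma prod_erase_inl (x : V ⊕ (G.edgeSet × Fin (3 - 2)) → ℂ) {a b : V} (h : G.Adj a b) :
    ∏ v ∈ (powerEdge G 3 (edgeOf G h)).erase (Sum.inl a), x v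
      = x (Sum.inl b) * x (Sum.inr (edgeOf G h, z0)) := by
  have hset : (powerEdge G 3 (edgeOf G h)).erase (Sum.inl a)
      = {Sum.inl b, Sum.inr (edgeOf G h, z0)} := by
    ext w
    rcases w with c | ⟨e', t⟩
    · simp only [Finset.mem_erase, inl_mem_powerEdge3, Finset.mem_insert, Finset.mem_singleton,
        edgeOf, Sym2.mem_iff, ne_eq, Sum.inl.injEq]
      constructor
      · rintro ⟨hca, hc⟩
        rcases hc with rfl | rfl
        · exact absurd rfl hca
        · exact Or.inl rfl
      · rintro (rfl | hfalse)
        · exact ⟨h.ne', Or.inr rfl⟩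
        · exact absurd hfalse (by simp)
    · obtain rfl : t = z0 := fin_eq_z0 t
      simp only [Finset.mem_erase, inr_mem_powerEdge3, Finset.mem_insert, Finset.mem_singleton]
      constructor
      · rintro ⟨-, rfl⟩; exact Or.inr rfl
      · rintro (hfalse | heq)
        · exact absurd hfalse (by simp)
        · obtain rfl : e' = edgeOf G h := by
            simpa using congrArg (fun w => match w with | Sum.inr p => p.1 | Sum.inl _ => e') heq
          exact ⟨by simp, rfl⟩
  rw [hset, Finset.prod_pair (by simp)]

lemma prod_erase_inr (x : V ⊕ (G.edgeSet × Fin (3 - 2)) → ℂ) {a b : V} (h : G.Adj a b)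
    (t : Fin (3 - 2)) :
    ∏ v ∈ (powerEdge G 3 (edgeOf G h)).erase (Sum.inr (edgeOf G h, t)), x v
      = x (Sum.inl a) * x (Sum.inl b) := by
  have hset : (powerEdge G 3 (edgeOf G h)).erase (Sum.inr (edgeOf G h, t))
      = {Sum.inl a, Sum.inl b} := by
    ext w
    rcases w with c | ⟨e', t'⟩
    · simp only [Finset.mem_erase, inl_mem_powerEdge3, Finset.mem_insert, Finset.mem_singleton,
        edgeOf, Sym2.mem_iff, Sum.inl.injEq]
      exact and_iff_right (by simp)
    · obtain rfl : t' = z0 := fin_eq_z0 t'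
      obtain rfl : t = z0 := fin_eq_z0 t
      simp only [Finset.mem_erase, inr_mem_powerEdge3, Finset.mem_insert, Finset.mem_singleton]
      constructor
      · rintro ⟨hne, rfl⟩; exact absurd rfl hne
      · rintro (hfalse | hfalse) <;> exact absurd hfalse (by simp)
  rw [hset, Finset.prod_pair (by simp [h.ne])]

end PH

namespace PH
set_option linter.unusedSectionVars false
variable {V : Type*} [Fintype V] [DecidableEq V] (G : SimpleGraph V) [DecidableRel G.Adj]

/-- The value of `x` at the added vertex on the edge `{i, j}` (or `0` if not an edge). -/
noncomputable def xe (x : V ⊕ (G.edgeSet × Fin (3 - 2)) → ℂ) (i j : V) : ℂ :=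
  if h : G.Adj i j then x (Sum.inr (edgeOf G h, z0)) else 0

lemma sum_inl (x : V ⊕ (G.edgeSet × Fin (3 - 2)) → ℂ) (i : V) :
    ∑ E ∈ (powerEdges G 3).filter (fun E => Sum.inl i ∈ E), ∏ v ∈ E.erase (Sum.inl i), x v
      = ∑ j ∈ G.neighborFinset i, x (Sum.inl j) * xe G x i j := by
  rw [Finset.sum_filter, powerEdges,
    Finset.sum_image (fun a _ b _ hab => powerEdge3_inj G hab), ← Finset.sum_filter]
  refine Finset.sum_bij' (fun e he => Sym2.Mem.other'
      ((inl_mem_powerEdge3 G).mp (Finset.mem_filter.mp he).2))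
    (fun j hj => edgeOf G (by simpa using hj : G.Adj i j)) ?_ ?_ ?_ ?_ ?_
  · intro e he
    have hm : i ∈ (e : Sym2 V) := (inl_mem_powerEdge3 G).mp (Finset.mem_filter.mp he).2
    have hspec := Sym2.other_spec' hm
    have hmem : s(i, Sym2.Mem.other' hm) ∈ G.edgeSet := hspec.symm ▸ e.2
    simpa using G.mem_edgeSet.mp hmem
  · intro j hj
    refine Finset.mem_filter.mpr ⟨Finset.mem_univ _, (inl_mem_powerEdge3 G).mpr ?_⟩
    simp [edgeOf]
  · intro e he
    have hm : i ∈ (e : Sym2 V) := (inl_mem_powerEdge3 G).mp (Finset.mem_filter.mp he).2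
    exact Subtype.ext (Sym2.other_spec' hm)
  · intro j hj
    exact Sym2.congr_right.mp (Sym2.other_spec' _)
  · intro e he
    have hm : i ∈ (e : Sym2 V) := (inl_mem_powerEdge3 G).mp (Finset.mem_filter.mp he).2
    have hadj : G.Adj i (Sym2.Mem.other' hm) := by
      have hspec := Sym2.other_spec' hm
      have hmem : s(i, Sym2.Mem.other' hm) ∈ G.edgeSet := hspec.symm ▸ e.2
      exact G.mem_edgeSet.mp hmem
    have he' : e = edgeOf G hadj := Subtype.ext (Sym2.other_spec' hm).symm
    have hxe : xe G x i (Sym2.Mem.other' hm) = x (Sum.inr (edgeOf G hadj, z0)) :=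
      dif_pos hadj
    have key : ∏ v ∈ (powerEdge G 3 e).erase (Sum.inl i), x v
        = x (Sum.inl (Sym2.Mem.other' hm)) * xe G x i (Sym2.Mem.other' hm) := by
      conv_lhs => rw [he']
      rw [prod_erase_inl, hxe]
    exact key

lemma sum_inr (x : V ⊕ (G.edgeSet × Fin (3 - 2)) → ℂ) {a b : V} (h : G.Adj a b)
    (t : Fin (3 - 2)) :
    ∑ E ∈ (powerEdges G 3).filter (fun E => Sum.inr (edgeOf G h, t) ∈ E),
        ∏ v ∈ E.erase (Sum.inr (edgeOf G h, t)), x v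
      = x (Sum.inl a) * x (Sum.inl b) := by
  rw [Finset.sum_filter, powerEdges,
    Finset.sum_image (fun a _ b _ hab => powerEdge3_inj G hab)]
  have : ∀ e : G.edgeSet,
      (if Sum.inr (edgeOf G h, t) ∈ powerEdge G 3 e then
        ∏ v ∈ (powerEdge G 3 e).erase (Sum.inr (edgeOf G h, t)), x v else 0)
      = if edgeOf G h = e then
          ∏ v ∈ (powerEdge G 3 e).erase (Sum.inr (edgeOf G h, t)), x v else 0 := by
    intro e
    congr 1
    exact propext (inr_mem_powerEdge3 G)
  rw [Finset.sum_congr rfl (fun e _ => this e), Finset.sum_ite_eq]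
  simp only [Finset.mem_univ, if_true]
  exact prod_erase_inr G x h t
end PH


namespace PH
set_option linter.unusedSectionVars false
variable {V : Type*} [Fintype V] [DecidableEq V] (G : SimpleGraph V) [DecidableRel G.Adj]

lemma eigenpair_of (lam : ℂ) (x : V ⊕ (G.edgeSet × Fin (3 - 2)) → ℂ) (hx0 : x ≠ 0)
    (hv : ∀ i : V, lam * x (Sum.inl i) ^ 2
        = ∑ j ∈ G.neighborFinset i, x (Sum.inl j) * xe G x i j)
    (he : ∀ (a b : V) (h : G.Adj a b) (t : Fin (3 - 2)),
        lam * x (Sum.inr (edgeOf G h, t)) ^ 2 = x (Sum.inl a) * x (Sum.inl b)) :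
    IsHypergraphEigenpair 3 (powerEdges G 3) lam x := by
  refine ⟨hx0, fun w => ?_⟩
  rcases w with i | ⟨e, t⟩
  · rw [sum_inl]; exact hv i
  · obtain ⟨a, b, h, rfl⟩ := edge_repr G e
    rw [sum_inr G x h t]; exact he a b h t

lemma eigenpair_equations (lam : ℂ) (x : V ⊕ (G.edgeSet × Fin (3 - 2)) → ℂ)
    (hx : IsHypergraphEigenpair 3 (powerEdges G 3) lam x) :
    (∀ i : V, lam * x (Sum.inl i) ^ 2
        = ∑ j ∈ G.neighborFinset i, x (Sum.inl j) * xe G x i j) ∧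
    (∀ (a b : V) (h : G.Adj a b) (t : Fin (3 - 2)),
        lam * x (Sum.inr (edgeOf G h, t)) ^ 2 = x (Sum.inl a) * x (Sum.inl b)) := by
  obtain ⟨-, hx⟩ := hx
  constructor
  · intro i
    have h1 := hx (Sum.inl i)
    rwa [sum_inl] at h1
  · intro a b h t
    have h1 := hx (Sum.inr (edgeOf G h, t))
    rwa [sum_inr G x h t] at h1

/-- The right-hand side of the main theorem, abbreviated. -/
def RHS (lam : ℂ) : Prop :=
  ∃ (S : Finset V) (π : Sym2 V → ℂ),
    (∀ i j : V, i ∈ S → j ∈ S → G.Adj i j → π s(i, j) = 1 ∨ π s(i, j) = -1) ∧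
    ∃ (β : ℂ) (y : ↥S → ℂ), β ^ 2 = lam ^ 3 ∧ y ≠ 0 ∧
      Matrix.mulVec
        (Matrix.of fun i j : ↥S => if G.Adj ↑i ↑j then π s((i : V), (j : V)) else 0) y
        = β • y

lemma rhs_zero (v0 : V) : RHS G 0 := by
  refine ⟨{v0}, fun _ => 1, fun i j _ _ _ => Or.inl rfl, 0, fun _ => 1, by norm_num, ?_, ?_⟩
  · intro h
    exact one_ne_zero (congrFun h ⟨v0, Finset.mem_singleton_self v0⟩)
  · funext i
    have hco : ∀ z : ↥({v0} : Finset V), (z : V) = v0 := fun z => Finset.mem_singleton.mp z.2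
    have hnadj : ∀ i j : ↥({v0} : Finset V), ¬ G.Adj ↑i ↑j := by
      intro i j
      rw [hco i, hco j]
      exact G.irrefl
    simp [Matrix.mulVec, dotProduct, hnadj i]

lemma exists_vertex (x : V ⊕ (G.edgeSet × Fin (3 - 2)) → ℂ) (hx0 : x ≠ 0) : Nonempty V := by
  obtain ⟨w, -⟩ := Function.ne_iff.mp hx0
  rcases w with i | ⟨e, t⟩
  · exact ⟨i⟩
  · obtain ⟨a, -, -, -⟩ := edge_repr G e
    exact ⟨a⟩

lemma backward_zero (v0 : V) :
    IsHypergraphEigenvalue 3 (powerEdges G 3) 0 := by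
  classical
  refine ⟨fun w => if w = Sum.inl v0 then 1 else 0, eigenpair_of G 0 _ ?_ ?_ ?_⟩
  · intro h
    have h1 := congrFun h (Sum.inl v0)
    simp at h1
  · intro i
    rw [zero_mul]
    refine (Finset.sum_eq_zero fun j _ => ?_).symm
    have hxe : xe G (fun w => if w = Sum.inl v0 then (1:ℂ) else 0) i j = 0 := by
      unfold xe
      split
      · simp
      · rfl
    rw [hxe, mul_zero]
  · intro a b h t
    rw [zero_mul]
    by_cases ha : a = v0
    · have hb : b ≠ v0 := fun hb => G.ne_of_adj h (by rw [ha, hb])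
      simp [hb]
    · simp [ha]

lemma forward_nonzero (lam : ℂ) (hlam : lam ≠ 0) (x : V ⊕ (G.edgeSet × Fin (3 - 2)) → ℂ)
    (hx0 : x ≠ 0)
    (hv : ∀ i : V, lam * x (Sum.inl i) ^ 2
        = ∑ j ∈ G.neighborFinset i, x (Sum.inl j) * xe G x i j)
    (he : ∀ (a b : V) (h : G.Adj a b) (t : Fin (3 - 2)),
        lam * x (Sum.inr (edgeOf G h, t)) ^ 2 = x (Sum.inl a) * x (Sum.inl b)) :
    RHS G lam := by
  classical
  set s : V → ℂ := fun i => csqrt (x (Sum.inl i)) with hs_def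
  have hs : ∀ i, s i ^ 2 = x (Sum.inl i) := fun i => csqrt_sq _
  set c : ℂ := csqrt lam with hc_def
  have hc : c ^ 2 = lam := csqrt_sq lam
  have hc0 : c ≠ 0 := fun h0 => hlam (by rw [← hc, h0]; ring)
  set S : Finset V := Finset.univ.filter (fun i => x (Sum.inl i) ≠ 0) with hS_def
  have hSmem : ∀ i, i ∈ S ↔ x (Sum.inl i) ≠ 0 := fun i => by simp [hS_def]
  have hs0 : ∀ i, i ∈ S → s i ≠ 0 := by
    intro i hi hsi
    exact (hSmem i).mp hi (by rw [← hs i, hsi]; ring)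
  set σ : Sym2 V → ℂ := Sym2.lift ⟨fun a b => s a * s b, fun a b => mul_comm _ _⟩ with hσ_def
  have hσmk : ∀ a b, σ s(a, b) = s a * s b := fun a b => by rw [hσ_def, Sym2.lift_mk]
  set π : Sym2 V → ℂ :=
    fun q => if h : q ∈ G.edgeSet then c * x (Sum.inr (⟨q, h⟩, z0)) / σ q else 1 with hπ_def
  have hπval : ∀ {a b : V} (h : G.Adj a b),
      π s(a, b) = c * x (Sum.inr (edgeOf G h, z0)) / (s a * s b) := by
    intro a b h
    rw [hπ_def]
    dsimp only
    rw [dif_pos (G.mem_edgeSet.mpr h), hσmk]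
    rfl
  have hπsign : ∀ a b : V, a ∈ S → b ∈ S → G.Adj a b → π s(a, b) = 1 ∨ π s(a, b) = -1 := by
    intro a b ha hb h
    have hxa := (hSmem a).mp ha
    have hxb := (hSmem b).mp hb
    have hsa := hs0 a ha
    have hsb := hs0 b hb
    have hxv := he a b h z0
    have hsq : π s(a, b) ^ 2 = 1 := by
      rw [hπval h, div_pow, mul_pow, hc]
      rw [div_eq_one_iff_eq (pow_ne_zero 2 (mul_ne_zero hsa hsb))]
      rw [mul_pow, hs, hs, hxv]
    rw [sq] at hsq
    exact mul_self_eq_one_iff.mp hsq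
  have hxv : ∀ {a b : V} (h : G.Adj a b), a ∈ S → b ∈ S →
      x (Sum.inr (edgeOf G h, z0)) = π s(a, b) * (s a * s b) / c := by
    intro a b h ha hb
    rw [hπval h]
    have hsa := hs0 a ha
    have hsb := hs0 b hb
    field_simp
  refine ⟨S, π, hπsign, lam * c, fun i => x (Sum.inl ↑i) * s ↑i, by rw [mul_pow, hc]; ring,
    ?_, ?_⟩
  · -- y ≠ 0
    obtain ⟨w, hw⟩ := Function.ne_iff.mp hx0
    have hw : x w ≠ 0 := hw
    have key : ∃ a : V, x (Sum.inl a) ≠ 0 := by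
      rcases w with i | ⟨e, t⟩
      · exact ⟨i, hw⟩
      · obtain ⟨a, b, h, rfl⟩ := edge_repr G e
        refine ⟨a, fun h0 => hw ?_⟩
        have h1 := he a b h t
        rw [h0, zero_mul] at h1
        have h2 : x (Sum.inr (edgeOf G h, t)) ^ 2 = 0 := by
          rcases mul_eq_zero.mp h1 with h' | h'
          · exact absurd h' hlam
          · exact h'
        exact pow_eq_zero_iff (two_ne_zero) |>.mp h2
    obtain ⟨a, ha⟩ := key
    have haS : a ∈ S := (hSmem a).mpr ha
    intro h0
    have h1 := congrFun h0 ⟨a, haS⟩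
    exact mul_ne_zero ha (hs0 a haS) h1
  · -- eigen equation
    funext i
    obtain ⟨iV, hiS⟩ := i
    have hxi := (hSmem iV).mp hiS
    have hsi := hs0 iV hiS
    have lhs_eq : (Matrix.mulVec
        (Matrix.of fun i j : ↥S => if G.Adj ↑i ↑j then π s((i : V), (j : V)) else 0)
        (fun i => x (Sum.inl ↑i) * s ↑i)) ⟨iV, hiS⟩
        = ∑ j ∈ S, (if G.Adj iV j then π s(iV, j) else 0) * (x (Sum.inl j) * s j) := by
      rw [Matrix.mulVec, dotProduct]
      exact Finset.sum_coe_sort S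
        (fun j => (if G.Adj iV j then π s(iV, j) else 0) * (x (Sum.inl j) * s j))
    rw [Pi.smul_apply, smul_eq_mul, lhs_eq]
    rw [Finset.sum_subset (Finset.subset_univ S) (by
      intro j _ hj
      have : x (Sum.inl j) = 0 := by
        by_contra hne
        exact hj ((hSmem j).mpr hne)
      rw [this, zero_mul, mul_zero])]
    have step : ∀ j ∈ Finset.univ (α := V),
        (if G.Adj iV j then π s(iV, j) else 0) * (x (Sum.inl j) * s j)
        = (c / s iV) * (if G.Adj iV j then x (Sum.inl j) * xe G x iV j else 0) := by
      intro j _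
      by_cases hadj : G.Adj iV j
      · rw [if_pos hadj, if_pos hadj]
        by_cases hxj : x (Sum.inl j) = 0
        · rw [hxj]; ring
        · have hjS : j ∈ S := (hSmem j).mpr hxj
          have hxe : xe G x iV j = x (Sum.inr (edgeOf G hadj, z0)) := dif_pos hadj
          rw [hxe, hxv hadj hiS hjS]
          have hsj := hs0 j hjS
          field_simp
      · rw [if_neg hadj, if_neg hadj, zero_mul, mul_zero]
    rw [Finset.sum_congr rfl step, ← Finset.mul_sum, ← Finset.sum_filter]
    have hNF : Finset.univ.filter (fun j => G.Adj iV j) = G.neighborFinset iV := by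
      ext j; simp
    rw [hNF, ← hv iV]
    have hxi2 := hs iV
    field_simp
    linear_combination (-1 : ℂ) * hxi2

lemma backward_nonzero (lam : ℂ) (hlam : lam ≠ 0) (h : RHS G lam) :
    IsHypergraphEigenvalue 3 (powerEdges G 3) lam := by
  classical
  obtain ⟨S, π, hπ, β, y, hβ, hy0, hAy⟩ := h
  have hβ0 : β ≠ 0 := by
    intro h0
    rw [h0] at hβ
    exact hlam (pow_eq_zero_iff three_ne_zero |>.mp (by rw [← hβ]; ring))
  set c : ℂ := β / lam with hc_def
  have hc0 : c ≠ 0 := div_ne_zero hβ0 hlam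
  have hc2 : c ^ 2 = lam := by
    rw [hc_def, div_pow, hβ]
    field_simp
  have hβc : β = lam * c := by rw [hc_def]; field_simp
  set Y : V → ℂ := fun i => if h : i ∈ S then y ⟨i, h⟩ else 0 with hY_def
  set X : V → ℂ := fun i => ccbrt (Y i ^ 2) with hX_def
  have hX3 : ∀ i, X i ^ 3 = Y i ^ 2 := fun i => ccbrt_cube _
  set s : V → ℂ := fun i => Y i / X i with hs_def
  have hX0 : ∀ i, Y i = 0 → X i = 0 := by
    intro i h0
    have h1 := hX3 i
    rw [h0] at h1
    exact pow_eq_zero_iff three_ne_zero |>.mp (by rw [h1]; ring)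
  have hXne : ∀ i, Y i ≠ 0 → X i ≠ 0 := by
    intro i h0 hX
    have h1 := hX3 i
    rw [hX] at h1
    exact h0 (pow_eq_zero_iff two_ne_zero |>.mp (by rw [← h1]; ring))
  have hs0 : ∀ i, Y i = 0 → s i = 0 := by
    intro i h0
    rw [hs_def]
    dsimp only
    rw [h0, zero_div]
  have hsq : ∀ i, Y i ≠ 0 → s i ^ 2 = X i := by
    intro i h0
    have hXi := hXne i h0
    rw [hs_def]
    dsimp only
    rw [div_pow, eq_comm, eq_div_iff (pow_ne_zero _ hXi), ← hX3 i]
    ring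
  have hXs : ∀ i, X i * s i = Y i := by
    intro i
    by_cases h0 : Y i = 0
    · rw [hs0 i h0, h0, mul_zero]
    · rw [hs_def]
      dsimp only
      rw [mul_div_cancel₀ _ (hXne i h0)]
  have hYS : ∀ i, i ∉ S → Y i = 0 := by
    intro i hiS
    rw [hY_def]
    dsimp only
    rw [dif_neg hiS]
  have hYmem : ∀ (i : V) (hi : i ∈ S), Y i = y ⟨i, hi⟩ := by
    intro i hi
    rw [hY_def]
    dsimp only
    rw [dif_pos hi]
  set σ : Sym2 V → ℂ := Sym2.lift ⟨fun a b => s a * s b, fun a b => mul_comm _ _⟩ with hσ_def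
  set x : V ⊕ (G.edgeSet × Fin (3 - 2)) → ℂ :=
    Sum.elim X (fun p => π p.1.val * σ p.1.val / c) with hx_def
  have hxinl : ∀ i, x (Sum.inl i) = X i := fun i => rfl
  have hxinr : ∀ {a b : V} (h : G.Adj a b) (t : Fin (3 - 2)),
      x (Sum.inr (edgeOf G h, t)) = π s(a, b) * (s a * s b) / c := by
    intro a b h t
    rw [hx_def]
    dsimp only [Sum.elim_inr]
    rw [hσ_def]
    rfl
  clear_value c Y X s σ x
  -- the key equation coming from the matrix eigen-equation
  have key : ∀ (i : V), i ∈ S →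
      ∑ j ∈ Finset.univ, (if G.Adj i j then π s(i, j) * Y j else 0) = β * Y i := by
    intro i hiS
    have hrow := congrFun hAy ⟨i, hiS⟩
    rw [Pi.smul_apply, smul_eq_mul] at hrow
    rw [Matrix.mulVec, dotProduct] at hrow
    calc ∑ j ∈ Finset.univ, (if G.Adj i j then π s(i, j) * Y j else 0)
        = ∑ j ∈ S, (if G.Adj i j then π s(i, j) * Y j else 0) := by
          refine (Finset.sum_subset (Finset.subset_univ S) ?_).symm
          intro j _ hj
          rw [hYS j hj]
          simp
      _ = ∑ j : ↥S, (if G.Adj i ↑j then π s(i, ↑j) * Y ↑j else 0) :=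
          (Finset.sum_coe_sort S (fun j => if G.Adj i j then π s(i, j) * Y j else 0)).symm
      _ = ∑ j : ↥S, (Matrix.of fun i j : ↥S =>
            if G.Adj ↑i ↑j then π s((i : V), (j : V)) else 0) ⟨i, hiS⟩ j * y j := by
          refine Finset.sum_congr rfl fun j _ => ?_
          rw [Matrix.of_apply, ite_mul, zero_mul, hYmem ↑j j.2]
      _ = β * y ⟨i, hiS⟩ := hrow
      _ = β * Y i := by rw [hYmem i hiS]
  refine ⟨x, eigenpair_of G lam x ?_ ?_ ?_⟩
  · -- x ≠ 0
    obtain ⟨⟨i, hiS⟩, hyi⟩ := Function.ne_iff.mp hy0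
    have hYi : Y i ≠ 0 := by rw [hYmem i hiS]; exact hyi
    intro h0
    exact hXne i hYi (by rw [← hxinl i, h0]; rfl)
  · -- vertex equations
    intro i
    have hterm : ∀ j ∈ G.neighborFinset i,
        x (Sum.inl j) * xe G x i j = (s i / c) * (if G.Adj i j then π s(i, j) * Y j else 0) := by
      intro j hj
      have hadj : G.Adj i j := by simpa using hj
      have hxe : xe G x i j = x (Sum.inr (edgeOf G hadj, z0)) := dif_pos hadj
      rw [hxe, hxinr hadj z0, if_pos hadj, hxinl, ← hXs j]
      field_simp
    rw [Finset.sum_congr rfl hterm, ← Finset.mul_sum, hxinl]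
    have hsum : ∑ j ∈ G.neighborFinset i, (if G.Adj i j then π s(i, j) * Y j else 0)
        = ∑ j ∈ Finset.univ, (if G.Adj i j then π s(i, j) * Y j else 0) := by
      refine Finset.sum_subset (Finset.subset_univ _) fun j _ hj => ?_
      exact if_neg (by simpa using hj)
    by_cases hYi : Y i = 0
    · rw [hs0 i hYi, hX0 i hYi]
      simp
    · have hiS : i ∈ S := by
        by_contra hiS
        exact hYi (hYS i hiS)
      rw [hsum, key i hiS, hβc]
      have h1 := hsq i hYi
      have h2 := hXs i
      have hXi := hXne i hYi
      have h3 := hX3 i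
      field_simp
      linear_combination (-(X i)) * h1 + (s i) * h2
  · -- added-vertex equations
    intro a b h t
    rw [hxinr h t, hxinl, hxinl]
    by_cases hYa : Y a = 0
    · rw [hs0 a hYa, hX0 a hYa, zero_mul, zero_mul]
      simp
    · by_cases hYb : Y b = 0
      · rw [hs0 b hYb, hX0 b hYb, mul_zero, mul_zero]
        simp
      · have haS : a ∈ S := by by_contra h0; exact hYa (hYS a h0)
        have hbS : b ∈ S := by by_contra h0; exact hYb (hYS b h0)
        have hπ2 : π s(a, b) ^ 2 = 1 := by
          rcases hπ a b haS hbS h with h1 | h1 <;> rw [h1] <;> ring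
        rw [div_pow, mul_pow, hπ2, one_mul, mul_pow, hsq a hYa, hsq b hYb, hc2]
        field_simp

end PH

/-- **Theorem (k = 3).** A complex number `lam` is an eigenvalue of the 3-power hypergraph
`G^(3)` if and only if some signed induced subgraph of `G` (induced on a vertex set `S`, with
sign function `π` on its edges) has an eigenvalue `β` with `β² = lam³`. -/
theorem power_hypergraph_eigenvalue_iff_signed_induced_subgraph
    {V : Type*} [Fintype V] [DecidableEq V] (G : SimpleGraph V) [DecidableRel G.Adj]
    (lam : ℂ) :
    IsHypergraphEigenvalue 3 (powerEdges G 3) lam ↔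
      ∃ (S : Finset V) (π : Sym2 V → ℂ),
        (∀ i j : V, i ∈ S → j ∈ S → G.Adj i j → π s(i, j) = 1 ∨ π s(i, j) = -1) ∧
        ∃ (β : ℂ) (y : ↥S → ℂ), β ^ 2 = lam ^ 3 ∧ y ≠ 0 ∧
          Matrix.mulVec
            (Matrix.of fun i j : ↥S => if G.Adj ↑i ↑j then π s((i : V), (j : V)) else 0) y
            = β • y := by
  constructor
  · rintro ⟨x, hx⟩
    have hx0 := hx.1
    obtain ⟨hv, he⟩ := PH.eigenpair_equations G lam x hx
    by_cases hlam : lam = 0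
    · subst hlam
      obtain ⟨v0⟩ := PH.exists_vertex G x hx0
      exact PH.rhs_zero G v0
    · exact PH.forward_nonzero G lam hlam x hx0 hv he
  · rintro h
    by_cases hlam : lam = 0
    · subst hlam
      obtain ⟨S, π, hπ, β, y, hβ, hy0, hAy⟩ := h
      obtain ⟨⟨v0, -⟩⟩ : Nonempty ↥S := not_isEmpty_iff.mp fun hemp => hy0 (funext fun z => (hemp.false z).elim)
      exact PH.backward_zero G v0
    · exact PH.backward_nonzero G lam hlam h
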